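/- arXiv:1303.5527 — 2 statements merged into one kernel-verified Lean document; each statement's English description precedes it below -/
import Mathlib

section
/- Let G be an r-regular simple graph with n vertices and m ≥ 1 edges, and let q_1 ≤ q_2 ≤ … ≤ q_n = 2r be the eigenvalues of Q(G) listed with multiplicity. Then f(λ, G^{-01}) = [(λ-n)(λ-2n-m+2r+2) - mn]·(λ-n)^{m-1}·∏_{i=1}^{n-1}(λ - n - m + 2 + q_i). -/
open Classical

/-- The four symbols `0, 1, +, -` used in `xyz`-transformations. -/
inductive XYZ : Type
  | zero | one | plus | minus

namespace XYZ

/-- The relation on the vertices of a graph `H` given by a symbol: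
`0` gives the empty graph, `1` the complete graph, `+` the graph itself,
`-` its complement. -/
def rel {W : Type*} (H : SimpleGraph W) : XYZ → W → W → Prop
  | .zero => fun _ _ => False
  | .one  => fun u v => u ≠ v
  | .plus => fun u v => H.Adj u v
  | .minus => fun u v => u ≠ v ∧ ¬ H.Adj u v

/-- The incidence relation between a vertex and an edge given by a symbol `z`:
`+` means incident, `-` means non-incident, `0` never, `1` always. -/
def inc {W : Type*} (G : SimpleGraph W) : XYZ → W → G.edgeSet → Prop
  | .zero => fun _ _ => False
  | .one  => fun _ _ => True
  | .plus => fun v e => v ∈ (e : Sym2 W)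
  | .minus => fun v e => v ∉ (e : Sym2 W)

theorem rel_symm {W : Type*} (H : SimpleGraph W) (x : XYZ) {u v : W}
    (h : rel H x u v) : rel H x v u := by
  cases x with
  | zero => exact h.elim
  | one => exact (h : u ≠ v).symm
  | plus => exact H.adj_symm h
  | minus => exact ⟨(h.1).symm, fun h' => h.2 (H.adj_symm h')⟩

theorem rel_irrefl {W : Type*} (H : SimpleGraph W) (x : XYZ) {u : W}
    (h : rel H x u u) : False := by
  cases x with
  | zero => exact h
  | one => exact h rfl
  | plus => exact H.irrefl h
  | minus => exact h.1 rfl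

end XYZ

/-- The `xyz`-transformation `G^{xyz}` of a graph `G`: its vertex set is
`V(G) ⊕ E(G)`; two vertices of `G` are adjacent according to the symbol `x`
(applied to `G`), two edges according to the symbol `y` (applied to the line
graph of `G`), and a vertex and an edge according to the symbol `z`
(`+` = incidence graph `B(G)`, `-` = non-incidence graph `B^c(G)`,
`0` = no vertex-edge edges, `1` = all vertex-edge edges). -/
def xyzTransform {V : Type*} (G : SimpleGraph V) (x y z : XYZ) :
    SimpleGraph (V ⊕ G.edgeSet) where
  Adj a b :=
    match a, b with
    | Sum.inl u, Sum.inl v => XYZ.rel G x u v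
    | Sum.inr e, Sum.inr f => XYZ.rel G.lineGraph y e f
    | Sum.inl v, Sum.inr e => XYZ.inc G z v e
    | Sum.inr e, Sum.inl v => XYZ.inc G z v e
  symm := ⟨by
    rintro (u | e) (v | f) h
    · exact XYZ.rel_symm G x h
    · exact h
    · exact h
    · exact XYZ.rel_symm G.lineGraph y h⟩
  loopless := ⟨by
    rintro (u | e) h
    · exact XYZ.rel_irrefl G x h
    · exact XYZ.rel_irrefl G.lineGraph y h⟩

/-- The signless Laplacian matrix `Q(G) = D(G) + A(G)` of a graph. -/
noncomputable def signlessLaplacian {V : Type*} [Fintype V] (G : SimpleGraph V) :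
    Matrix V V ℝ :=
  Matrix.of fun u v =>
    (if u = v then (G.degree u : ℝ) else 0) + (if G.Adj u v then 1 else 0)

/-- The signless Laplacian characteristic polynomial
`f(λ, G) = det (λ I - Q(G))`, evaluated at a real number `λ`. -/
noncomputable def fQ {V : Type*} [Fintype V] (G : SimpleGraph V) (lam : ℝ) : ℝ :=
  Matrix.det (lam • (1 : Matrix V V ℝ) - signlessLaplacian G)

set_option linter.unusedSectionVars false
open Matrix Polynomial

lemma evalCharpoly {N : Type*} [Fintype N] [DecidableEq N] (M : Matrix N N ℝ) (x : ℝ) :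
    (M.charpoly).eval x = (x • (1 : Matrix N N ℝ) - M).det := by
  have h := RingHom.map_det (Polynomial.evalRingHom x) (Matrix.charmatrix M)
  rw [Matrix.charpoly]
  rw [show Polynomial.eval x (Matrix.charmatrix M).det
      = ((Matrix.charmatrix M).map (Polynomial.evalRingHom x)).det from h]
  congr 1
  ext i j
  by_cases h' : i = j
  · subst h'; simp [Matrix.charmatrix_apply_eq, Matrix.one_apply]
  · simp [Matrix.charmatrix_apply_ne _ _ _ h', Matrix.one_apply_ne h']

section Aux
variable {V : Type*} [Fintype V] (G : SimpleGraph V)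

lemma card_subtype_sum' {V E : Type*} [Fintype V] [Fintype E] (P : V ⊕ E → Prop) :
    Fintype.card {y : V ⊕ E // P y} =
      Fintype.card {v : V // P (Sum.inl v)} + Fintype.card {e : E // P (Sum.inr e)} := by
  rw [← Fintype.card_sum]
  exact Fintype.card_congr Equiv.subtypeSum

lemma T_adj_inl_inl (u v : V) :
    (xyzTransform G XYZ.minus XYZ.zero XYZ.one).Adj (Sum.inl u) (Sum.inl v) ↔
      (u ≠ v ∧ ¬ G.Adj u v) := Iff.rfl

lemma T_adj_inl_inr (v : V) (e : G.edgeSet) :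
    (xyzTransform G XYZ.minus XYZ.zero XYZ.one).Adj (Sum.inl v) (Sum.inr e) ↔ True := Iff.rfl

lemma T_adj_inr_inl (v : V) (e : G.edgeSet) :
    (xyzTransform G XYZ.minus XYZ.zero XYZ.one).Adj (Sum.inr e) (Sum.inl v) ↔ True := Iff.rfl

lemma T_adj_inr_inr (e f : G.edgeSet) :
    (xyzTransform G XYZ.minus XYZ.zero XYZ.one).Adj (Sum.inr e) (Sum.inr f) ↔ False := Iff.rfl

lemma deg_inl (r : ℕ) (hreg : G.IsRegularOfDegree r) (v : V) :
    (xyzTransform G XYZ.minus XYZ.zero XYZ.one).degree (Sum.inl v)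
      = (Fintype.card V - 1 - r) + Fintype.card G.edgeSet := by
  classical
  rw [← SimpleGraph.card_neighborSet_eq_degree]
  have : Fintype.card ((xyzTransform G XYZ.minus XYZ.zero XYZ.one).neighborSet (Sum.inl v))
      = Fintype.card {u : V // Gᶜ.Adj v u} + Fintype.card {e : G.edgeSet // True} := by
    rw [show Fintype.card ((xyzTransform G XYZ.minus XYZ.zero XYZ.one).neighborSet (Sum.inl v))
        = Fintype.card {y : V ⊕ G.edgeSet // (xyzTransform G XYZ.minus XYZ.zero XYZ.one).Adj (Sum.inl v) y} from
      Fintype.card_congr (Equiv.subtypeEquivRight (fun y =>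
        (xyzTransform G XYZ.minus XYZ.zero XYZ.one).mem_neighborSet _ y))]
    rw [card_subtype_sum' (fun y => (xyzTransform G XYZ.minus XYZ.zero XYZ.one).Adj (Sum.inl v) y)]
    congr 1
    · exact Fintype.card_congr (Equiv.subtypeEquivRight (fun u => by
        rw [T_adj_inl_inl, SimpleGraph.compl_adj]))
    · exact Fintype.card_congr (Equiv.subtypeEquivRight (fun e => by rw [T_adj_inl_inr]))
  rw [this]
  congr 1
  · have : Fintype.card {u : V // Gᶜ.Adj v u} = Gᶜ.degree v := by
      rw [← SimpleGraph.card_neighborSet_eq_degree]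
      exact Fintype.card_congr (Equiv.subtypeEquivRight (fun u => Iff.rfl))
    rw [this, SimpleGraph.degree_compl, hreg v]
  · exact Fintype.card_congr (Equiv.subtypeUnivEquiv (fun _ => trivial))

lemma deg_inr (e : G.edgeSet) :
    (xyzTransform G XYZ.minus XYZ.zero XYZ.one).degree (Sum.inr e) = Fintype.card V := by
  classical
  rw [← SimpleGraph.card_neighborSet_eq_degree]
  rw [show Fintype.card ((xyzTransform G XYZ.minus XYZ.zero XYZ.one).neighborSet (Sum.inr e))
      = Fintype.card {y : V ⊕ G.edgeSet // (xyzTransform G XYZ.minus XYZ.zero XYZ.one).Adj (Sum.inr e) y} from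
    Fintype.card_congr (Equiv.subtypeEquivRight (fun y =>
      (xyzTransform G XYZ.minus XYZ.zero XYZ.one).mem_neighborSet _ y))]
  rw [card_subtype_sum' (fun y => (xyzTransform G XYZ.minus XYZ.zero XYZ.one).Adj (Sum.inr e) y)]
  have h1 : Fintype.card {v : V // (xyzTransform G XYZ.minus XYZ.zero XYZ.one).Adj (Sum.inr e) (Sum.inl v)} = Fintype.card V :=
    Fintype.card_congr (Equiv.subtypeUnivEquiv (fun _ => trivial))
  have h2 : Fintype.card {f : G.edgeSet // (xyzTransform G XYZ.minus XYZ.zero XYZ.one).Adj (Sum.inr e) (Sum.inr f)} = 0 := by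
    simp only [T_adj_inr_inr]
    exact Fintype.card_eq_zero
  rw [h1, h2]
  omega


set_option maxHeartbeats 800000 in
lemma block_eq (r n m : ℕ) (hn : Fintype.card V = n) (hm : Fintype.card G.edgeSet = m)
    (hreg : G.IsRegularOfDegree r) (hrn : r + 1 ≤ n) (lam : ℝ) :
    fQ (xyzTransform G XYZ.minus XYZ.zero XYZ.one) lam
      = Matrix.det (Matrix.fromBlocks
          (((lam : ℝ) - n - m + r + 2) • (1 : Matrix V V ℝ) + G.adjMatrix ℝ
            - Matrix.of (fun _ _ => 1))
          (Matrix.of fun _ _ => (-1 : ℝ)) (Matrix.of fun _ _ => (-1 : ℝ))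
          ((lam - n) • (1 : Matrix G.edgeSet G.edgeSet ℝ))) := by
  have hc : ((n - 1 - r + m : ℕ) : ℝ) = (n : ℝ) - 1 - r + m := by
    have h1 : ((n - 1 - r : ℕ) : ℝ) = (n : ℝ) - 1 - r := by
      have h0 : (n - 1 - r : ℕ) + r + 1 = n := by omega
      have := congrArg (fun k : ℕ => (k : ℝ)) h0
      push_cast at this
      linarith
    push_cast [h1]
    ring
  rw [fQ]
  congr 1
  ext x y
  rcases x with u | e <;> rcases y with v | f
  · simp only [Matrix.sub_apply, Matrix.smul_apply, Matrix.one_apply, Matrix.fromBlocks_apply₁₁,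
      Matrix.add_apply, Matrix.of_apply, signlessLaplacian, deg_inl G r hreg, hn, hm,
      SimpleGraph.adjMatrix_apply, Sum.inl.injEq, hc, smul_eq_mul]
    rw [show ((xyzTransform G XYZ.minus XYZ.zero XYZ.one).Adj (Sum.inl u) (Sum.inl v))
        = (u ≠ v ∧ ¬ G.Adj u v) from propext (T_adj_inl_inl G u v)]
    by_cases huv : u = v
    · subst huv
      simp [G.irrefl]
      ring
    · by_cases hadj : G.Adj u v
      · simp [huv, hadj]
      · simp [huv, hadj]
  · simp only [Matrix.sub_apply, Matrix.smul_apply, Matrix.one_apply, Matrix.fromBlocks_apply₁₂,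
      Matrix.of_apply, signlessLaplacian, smul_eq_mul]
    rw [if_neg (by simp), if_neg (by simp),
      if_pos (show (xyzTransform G XYZ.minus XYZ.zero XYZ.one).Adj (Sum.inl u) (Sum.inr f)
        from trivial)]
    ring
  · simp only [Matrix.sub_apply, Matrix.smul_apply, Matrix.one_apply, Matrix.fromBlocks_apply₂₁,
      Matrix.of_apply, signlessLaplacian, smul_eq_mul]
    rw [if_neg (by simp), if_neg (by simp),
      if_pos (show (xyzTransform G XYZ.minus XYZ.zero XYZ.one).Adj (Sum.inr e) (Sum.inl v)
        from trivial)]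
    ring
  · simp only [Matrix.sub_apply, Matrix.smul_apply, Matrix.one_apply, Matrix.fromBlocks_apply₂₂,
      Matrix.of_apply, signlessLaplacian, deg_inr, hn, Sum.inr.injEq, smul_eq_mul]
    by_cases hef : e = f
    · subst hef
      simp [(xyzTransform G XYZ.minus XYZ.zero XYZ.one).irrefl]
    · rw [if_neg hef, if_neg hef, if_neg (by simp [T_adj_inr_inr, hef] :
        ¬ (xyzTransform G XYZ.minus XYZ.zero XYZ.one).Adj (Sum.inr e) (Sum.inr f))]
      simp [hef]


lemma good_lam (r n m : ℕ) (hn : Fintype.card V = n) (hm : Fintype.card G.edgeSet = m)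
    (hreg : G.IsRegularOfDegree r) (hrn : r + 1 ≤ n)
    (q : Fin n → ℝ) (hq : ∀ x : ℝ, fQ G x = ∏ i : Fin n, (x - q i))
    (lam : ℝ) (hlam1 : lam ≠ (n : ℝ))
    (hlam2 : ∀ i : Fin n, lam - n - m + 2 + q i ≠ 0)
    (hc : lam - n - m + 2 + 2 * r ≠ 0) :
    fQ (xyzTransform G XYZ.minus XYZ.zero XYZ.one) lam
      = (lam - n) ^ m * (∏ i : Fin n, (lam - n - m + 2 + q i))
        * (1 + (n : ℝ) * ((lam - n - m + 2 + 2 * r)⁻¹ * -(1 + m / (lam - n)))) := by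
  classical
  have hln : lam - (n : ℝ) ≠ 0 := sub_ne_zero.mpr hlam1
  set α : ℝ := lam - n - m + r + 2 with hα
  set c : ℝ := lam - n - m + 2 + 2 * r with hcdef
  set A : Matrix V V ℝ := G.adjMatrix ℝ with hA
  set M₀ : Matrix V V ℝ := α • (1 : Matrix V V ℝ) + A with hM₀
  -- signless Laplacian of G
  have hQG : signlessLaplacian G = (r : ℝ) • (1 : Matrix V V ℝ) + A := by
    ext u v
    simp only [signlessLaplacian, Matrix.of_apply, Matrix.add_apply, Matrix.smul_apply,
      Matrix.one_apply, SimpleGraph.adjMatrix_apply, smul_eq_mul, hreg u, hA]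
    by_cases h : u = v
    · subst h; simp [G.irrefl]
    · simp [h]
  -- determinant of M₀
  have hdetM : M₀.det = ∏ i : Fin n, (lam - n - m + 2 + q i) := by
    have h2 : ((r : ℝ) - α) • (1 : Matrix V V ℝ) - signlessLaplacian G = -M₀ := by
      rw [hQG, hM₀]
      ext u v
      simp only [Matrix.sub_apply, Matrix.smul_apply, Matrix.add_apply, Matrix.neg_apply,
        Matrix.one_apply, smul_eq_mul]
      by_cases h : u = v <;> simp [h] <;> ring
    have h3 : fQ G ((r : ℝ) - α) = (-1 : ℝ) ^ n * M₀.det := by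
      rw [fQ, h2, Matrix.det_neg, hn]
    have h4 : fQ G ((r : ℝ) - α) = ∏ i : Fin n, ((r : ℝ) - α - q i) := hq _
    have h5 : (∏ i : Fin n, (lam - n - m + 2 + q i))
        = (-1 : ℝ) ^ n * ∏ i : Fin n, ((r : ℝ) - α - q i) := by
      have hcongr : ∀ i ∈ Finset.univ, lam - (n : ℝ) - m + 2 + q i
          = -1 * ((r : ℝ) - α - q i) := fun i _ => by rw [hα]; ring
      rw [Finset.prod_congr rfl hcongr, Finset.prod_mul_distrib, Finset.prod_const,
        Finset.card_univ, Fintype.card_fin]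
    have hsq : ((-1 : ℝ) ^ n) * ((-1 : ℝ) ^ n) = 1 := by
      rw [← pow_add]
      exact Even.neg_one_pow ⟨n, rfl⟩
    rw [h5, ← h4, h3]
    rw [← mul_assoc, hsq, one_mul]
  have hdet_ne : IsUnit M₀.det := by
    rw [hdetM]
    exact (Finset.prod_ne_zero_iff.mpr (fun i _ => hlam2 i)).isUnit
  -- row sums and column sums
  have hones : M₀ *ᵥ (Function.const V (1 : ℝ)) = Function.const V c := by
    funext v
    rw [hM₀, Matrix.add_mulVec, Matrix.smul_mulVec, Matrix.one_mulVec]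
    have := SimpleGraph.adjMatrix_mulVec_const_apply_of_regular (α := ℝ) (a := (1:ℝ)) hreg (v := v)
    simp only [Pi.add_apply, Pi.smul_apply, Function.const_apply, smul_eq_mul, hA, this,
      hα, hcdef]
    ring
  have hMsymm : M₀ᵀ = M₀ := by
    rw [hM₀, Matrix.transpose_add, Matrix.transpose_smul, Matrix.transpose_one,
      hA, SimpleGraph.transpose_adjMatrix]
  have honesc : (Function.const V (1 : ℝ)) ᵥ* M₀ = Function.const V c := by
    rw [← hMsymm, Matrix.vecMul_transpose, hones]
  have hcinv : (Function.const V (1 : ℝ)) ᵥ* M₀⁻¹ = Function.const V c⁻¹ := by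
    have h1 : (Function.const V (1 : ℝ)) ᵥ* M₀ ᵥ* M₀⁻¹ = Function.const V (1 : ℝ) := by
      rw [Matrix.vecMul_vecMul, Matrix.mul_nonsing_inv _ hdet_ne, Matrix.vecMul_one]
    rw [honesc] at h1
    funext j
    have h2 := congrFun h1 j
    simp only [Matrix.vecMul, dotProduct, Function.const_apply, one_mul] at h2 ⊢
    rw [← Finset.mul_sum] at h2
    exact eq_inv_of_mul_eq_one_right h2
  -- block determinant
  rw [block_eq G r n m hn hm hreg hrn lam, ← hα]
  set D : Matrix G.edgeSet G.edgeSet ℝ := (lam - n) • 1 with hD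
  have hDdet : D.det = (lam - n) ^ m := by
    rw [hD, Matrix.det_smul, Matrix.det_one, hm, mul_one]
  haveI : Invertible D :=
    Matrix.invertibleOfIsUnitDet D (by rw [hDdet]; exact (pow_ne_zero m hln).isUnit)
  rw [Matrix.det_fromBlocks₂₂]
  have hDinv : ⅟D = (lam - n)⁻¹ • (1 : Matrix G.edgeSet G.edgeSet ℝ) := by
    rw [Matrix.invOf_eq_nonsing_inv]
    apply Matrix.inv_eq_right_inv
    rw [hD, smul_mul_assoc, Matrix.one_mul, smul_smul, mul_inv_cancel₀ hln, one_smul]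
  set u : V → ℝ := fun _ => -(1 + m / (lam - n)) with hu
  set v1 : V → ℝ := fun _ => (1 : ℝ) with hv1
  have hSchur : (α • (1 : Matrix V V ℝ) + G.adjMatrix ℝ - Matrix.of (fun _ _ => (1:ℝ)))
      - (Matrix.of (fun (_ : V) (_ : G.edgeSet) => (-1:ℝ))) * ⅟D
        * (Matrix.of (fun (_ : G.edgeSet) (_ : V) => (-1:ℝ)))
      = M₀ + Matrix.replicateCol Unit u * Matrix.replicateRow Unit v1 := by
    have hBDC : (Matrix.of (fun (_ : V) (_ : G.edgeSet) => (-1:ℝ))) * ⅟D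
        * (Matrix.of (fun (_ : G.edgeSet) (_ : V) => (-1:ℝ)))
        = Matrix.of (fun (_ : V) (_ : V) => (lam - (n : ℝ))⁻¹ * m) := by
      rw [hDinv]
      ext i j
      simp only [Matrix.mul_apply, Matrix.smul_apply, Matrix.one_apply, Matrix.of_apply,
        smul_eq_mul, mul_ite, mul_one, mul_zero, Finset.sum_ite_eq', Finset.mem_univ,
        if_true, neg_mul_neg, one_mul]
      simp [Finset.sum_const, Finset.card_univ, hm]
      ring
    rw [hBDC, hM₀, hA]
    ext i j
    simp only [Matrix.sub_apply, Matrix.add_apply, Matrix.smul_apply, Matrix.of_apply,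
      Matrix.mul_apply, Matrix.replicateCol_apply, Matrix.replicateRow_apply, hu, hv1, smul_eq_mul,
      Finset.univ_unique, Finset.sum_singleton]
    field_simp
    ring
  rw [hSchur, Matrix.det_add_replicateCol_mul_replicateRow hdet_ne]
  have hrowinv : ∀ j : V, (Matrix.replicateRow Unit v1 * M₀⁻¹) default j = c⁻¹ := by
    intro j
    rw [Matrix.mul_apply]
    have h2 := congrFun hcinv j
    simp only [Matrix.vecMul, dotProduct, Function.const_apply, one_mul] at h2
    simpa [Matrix.replicateRow_apply, hv1] using h2
  have hX : Matrix.replicateRow Unit v1 * M₀⁻¹ * Matrix.replicateCol Unit u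
      = Matrix.of (fun (_ : Unit) (_ : Unit) => (n : ℝ) * (c⁻¹ * -(1 + m / (lam - n)))) := by
    ext d d'
    rw [Matrix.mul_apply]
    have hdq : ∀ j : V, (Matrix.replicateRow Unit v1 * M₀⁻¹) d j = c⁻¹ := by
      intro j
      have := hrowinv j
      rwa [Unique.eq_default d]
    simp only [hdq, Matrix.replicateCol_apply, hu, Matrix.of_apply, Finset.sum_const,
      Finset.card_univ, hn, nsmul_eq_mul]
  rw [hX, hDdet, hdetM]
  have hdet1 : (1 + Matrix.of (fun (_ : Unit) (_ : Unit)
      => (n : ℝ) * (c⁻¹ * -(1 + m / (lam - n))))).det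
      = 1 + (n : ℝ) * (c⁻¹ * -(1 + m / (lam - n))) := by
    rw [Matrix.det_unique]
    simp [Matrix.add_apply, Matrix.one_apply]
  rw [hdet1]
  ring

end Aux

theorem signless_charpoly_xyz_m01 {V : Type*} [Fintype V] (G : SimpleGraph V) (r n m : ℕ)
    (hn : Fintype.card V = n) (hm : Fintype.card G.edgeSet = m)
    (hreg : G.IsRegularOfDegree r) (hm1 : 1 ≤ m) (hn0 : 0 < n)
    (q : Fin n → ℝ) (hmono : Monotone q)
    (hlast : q ⟨n - 1, by omega⟩ = 2 * r)
    (hq : ∀ x : ℝ, fQ G x = ∏ i : Fin n, (x - q i)) :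
    ∀ lam : ℝ,
      fQ (xyzTransform G XYZ.minus XYZ.zero XYZ.one) lam =
        ((lam - n) * (lam - 2 * n - m + 2 * r + 2) - m * n) * (lam - n) ^ (m - 1) *
          ∏ i : Fin (n - 1), (lam - n - m + 2 + q (Fin.castLE (Nat.sub_le n 1) i)) := by
  intro lam
  classical
  have hrn : r + 1 ≤ n := by
    have hne : Nonempty V := Fintype.card_pos_iff.mp (by omega : 0 < Fintype.card V)
    obtain ⟨v⟩ := hne
    have hlt := G.degree_lt_card_verts v
    rw [hreg v, hn] at hlt
    omega
  obtain ⟨k, rfl⟩ : ∃ k, n = k + 1 := ⟨n - 1, by omega⟩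
  have hlast' : q (Fin.last k) = 2 * r := hlast
  -- key identity for generic lam
  have key : ∀ x : ℝ, x ≠ ((k + 1 : ℕ) : ℝ) →
      (∀ i : Fin (k + 1), x - (k + 1 : ℕ) - m + 2 + q i ≠ 0) →
      fQ (xyzTransform G XYZ.minus XYZ.zero XYZ.one) x =
        ((x - (k + 1 : ℕ)) * (x - 2 * (k + 1 : ℕ) - m + 2 * r + 2) - m * (k + 1 : ℕ))
            * (x - (k + 1 : ℕ)) ^ (m - 1) *
          ∏ i : Fin (k + 1 - 1),
            (x - (k + 1 : ℕ) - m + 2 + q (Fin.castLE (Nat.sub_le (k + 1) 1) i)) := by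
    intro x hx1 hx2
    have hc' : x - ((k + 1 : ℕ) : ℝ) - m + 2 + 2 * r ≠ 0 := by
      have h := hx2 (Fin.last k)
      rwa [hlast'] at h
    rw [good_lam G r (k + 1) m hn hm hreg hrn q hq x hx1 hx2 hc']
    rw [Fin.prod_univ_castSucc (f := fun i : Fin (k + 1) =>
      x - ((k + 1 : ℕ) : ℝ) - m + 2 + q i)]
    rw [hlast']
    have hprodeq : (∏ i : Fin (k + 1 - 1),
          (x - ((k + 1 : ℕ) : ℝ) - m + 2 + q (Fin.castLE (Nat.sub_le (k + 1) 1) i)))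
        = ∏ i : Fin k, (x - ((k + 1 : ℕ) : ℝ) - m + 2 + q i.castSucc) :=
      Finset.prod_congr rfl (fun i _ => by congr 1)
    rw [hprodeq]
    obtain ⟨m', rfl⟩ : ∃ m', m = m' + 1 := ⟨m - 1, by omega⟩
    have hx1' : x - ((k + 1 : ℕ) : ℝ) ≠ 0 := sub_ne_zero.mpr hx1
    simp only [Nat.add_sub_cancel]
    push_cast at hx1' hc' ⊢
    field_simp
    ring
  -- polynomial identity
  set T := xyzTransform G XYZ.minus XYZ.zero XYZ.one with hT
  set instD : DecidableEq (V ⊕ G.edgeSet) := fun a b => Classical.propDecidable (a = b)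
    with hinstD
  set P₁ : Polynomial ℝ := @Matrix.charpoly ℝ _ (V ⊕ G.edgeSet) instD _ (signlessLaplacian T) with hP₁
  have hfq : ∀ x : ℝ, fQ T x = Polynomial.eval x P₁ := by
    intro x
    rw [fQ, hP₁]
    exact (@evalCharpoly (V ⊕ G.edgeSet) _ instD (signlessLaplacian T) x).symm
  set P₂ : Polynomial ℝ :=
    ((Polynomial.X - Polynomial.C (((k + 1 : ℕ) : ℝ)))
        * (Polynomial.X - Polynomial.C (2 * ((k + 1 : ℕ) : ℝ) + m - 2 * r - 2))
      - Polynomial.C ((m : ℝ) * ((k + 1 : ℕ) : ℝ)))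
      * (Polynomial.X - Polynomial.C (((k + 1 : ℕ) : ℝ))) ^ (m - 1)
      * ∏ i : Fin (k + 1 - 1),
          (Polynomial.X - Polynomial.C (((k + 1 : ℕ) : ℝ) + m - 2
            - q (Fin.castLE (Nat.sub_le (k + 1) 1) i))) with hP₂def
  have hP₂ : ∀ x : ℝ, Polynomial.eval x P₂ =
      ((x - (k + 1 : ℕ)) * (x - 2 * (k + 1 : ℕ) - m + 2 * r + 2) - m * (k + 1 : ℕ))
          * (x - (k + 1 : ℕ)) ^ (m - 1) *
        ∏ i : Fin (k + 1 - 1),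
          (x - (k + 1 : ℕ) - m + 2 + q (Fin.castLE (Nat.sub_le (k + 1) 1) i)) := by
    intro x
    rw [hP₂def]
    simp only [Polynomial.eval_mul, Polynomial.eval_sub, Polynomial.eval_pow,
      Polynomial.eval_prod, Polynomial.eval_X, Polynomial.eval_C]
    congr 1
    · congr 1
      ring
    · exact Finset.prod_congr rfl (fun i _ => by ring)
  -- the two polynomials agree on a cofinite set
  have hfin : (insert (((k + 1 : ℕ) : ℝ))
      (Set.range (fun i : Fin (k + 1) => ((k + 1 : ℕ) : ℝ) + m - 2 - q i))).Finite :=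
    (Set.finite_range _).insert _
  have hsub : (insert (((k + 1 : ℕ) : ℝ))
      (Set.range (fun i : Fin (k + 1) => ((k + 1 : ℕ) : ℝ) + m - 2 - q i)))ᶜ
      ⊆ {x : ℝ | Polynomial.eval x P₁ = Polynomial.eval x P₂} := by
    intro x hx
    simp only [Set.mem_compl_iff, Set.mem_insert_iff, Set.mem_range, not_or, not_exists] at hx
    obtain ⟨hx1, hx2⟩ := hx
    have hx2' : ∀ i : Fin (k + 1), x - ((k + 1 : ℕ) : ℝ) - m + 2 + q i ≠ 0 := by
      intro i h
      exact hx2 i (by linarith)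
    have := key x hx1 hx2'
    rw [hfq x, ← hP₂ x] at this
    exact this
  have hpq : P₁ = P₂ :=
    Polynomial.eq_of_infinite_eval_eq P₁ P₂ (Set.Infinite.mono hsub hfin.infinite_compl)
  rw [hfq lam, hpq, hP₂ lam]
end

section
/- Let G be an r-regular simple graph with n vertices and m edges, where r ≥ 2 (so that m ≥ n), and let q_1 ≤ q_2 ≤ … ≤ q_n = 2r be the eigenvalues of Q(G) listed with multiplicity. Then f(λ, G^{1+1}) = [(λ-2n-m+2)(λ-n-4r+4) - mn]·(λ-n-2r+4)^{m-n}·(λ-n-m+2)^{n-1}·∏_{i=1}^{n-1}(λ - n - 2r + 4 - q_i). -/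
open Classical

section XYZAux

open Matrix Finset SimpleGraph Polynomial

variable {V : Type*} [Fintype V] (G : SimpleGraph V)

/-- vertex-edge incidence matrix -/
noncomputable def incB : Matrix V G.edgeSet ℝ :=
  Matrix.of fun v e => if v ∈ (e : Sym2 V) then 1 else 0

lemma sum_ite_mem_nat (v : V) :
    ∑ e : G.edgeSet, (if v ∈ (e : Sym2 V) then (1 : ℕ) else 0) = G.degree v := by
  classical
  rw [← Finset.sum_subtype G.edgeFinset (fun x => G.mem_edgeFinset)
      (fun e => if v ∈ e then (1 : ℕ) else 0)]
  rw [Finset.sum_boole]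
  rw [← SimpleGraph.incidenceFinset_eq_filter, SimpleGraph.card_incidenceFinset_eq_degree]
  simp

lemma sum_ite_mem_real (v : V) :
    ∑ e : G.edgeSet, (if v ∈ (e : Sym2 V) then (1 : ℝ) else 0) = G.degree v := by
  rw [← sum_ite_mem_nat G v]
  push_cast
  rfl

lemma sum_row_incB (v : V) : ∑ e : G.edgeSet, incB G v e = G.degree v := by
  simpa [incB] using sum_ite_mem_real G v

lemma sum_col_incB (e : G.edgeSet) : ∑ v, incB G v e = 2 := by
  classical
  obtain ⟨e, he⟩ := e
  induction e using Sym2.ind with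
  | _ a b =>
    have hab : a ≠ b := (G.mem_edgeSet.mp he).ne
    have key : ∀ v : V, incB G v ⟨s(a,b), he⟩
        = (if v = a then (1:ℝ) else 0) + (if v = b then 1 else 0) := by
      intro v
      simp only [incB, Matrix.of_apply, Sym2.mem_iff]
      by_cases h1 : v = a <;> by_cases h2 : v = b <;> simp_all
    rw [Finset.sum_congr rfl fun v _ => key v, Finset.sum_add_distrib]
    simp
    norm_num

lemma incB_mul_transpose : incB G * (incB G)ᵀ = signlessLaplacian G := by
  classical
  ext u v
  rw [Matrix.mul_apply]
  by_cases huv : u = v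
  · subst huv
    have key : ∀ e : G.edgeSet, incB G u e * (incB G)ᵀ e u
        = if u ∈ (e : Sym2 V) then (1:ℝ) else 0 := by
      intro e; simp only [incB, transpose_apply, of_apply]; split_ifs <;> ring
    rw [Finset.sum_congr rfl fun e _ => key e, sum_ite_mem_real]
    simp [signlessLaplacian]
  · have hstep : ∀ e : G.edgeSet, incB G u e * (incB G)ᵀ e v
        = if (e : Sym2 V) = s(u,v) then (1:ℝ) else 0 := by
      intro e
      simp only [incB, transpose_apply, of_apply]
      by_cases h : (e : Sym2 V) = s(u,v)
      · simp [h, Sym2.mem_iff, huv]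
      · have hc : ¬ (u ∈ (e : Sym2 V) ∧ v ∈ (e : Sym2 V)) :=
          fun hc => h ((Sym2.mem_and_mem_iff huv).mp hc)
        split_ifs with h1 h2 <;> simp_all
    rw [Finset.sum_congr rfl fun e _ => hstep e]
    rw [← Finset.sum_subtype G.edgeFinset (fun x => G.mem_edgeFinset)
        (fun e => if e = s(u,v) then (1:ℝ) else 0)]
    rw [Finset.sum_ite_eq' G.edgeFinset (s(u,v)) (fun _ => (1:ℝ))]
    simp [signlessLaplacian, huv]

end XYZAux
section XYZAux2
set_option linter.unusedSectionVars false

open Matrix Finset SimpleGraph Polynomial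

variable {V : Type*} [Fintype V] (G : SimpleGraph V)

lemma xyz_adj_inl_inl (u v : V) :
    (xyzTransform G XYZ.one XYZ.plus XYZ.one).Adj (Sum.inl u) (Sum.inl v) ↔ u ≠ v :=
  Iff.rfl

lemma xyz_adj_inl_inr (v : V) (e : G.edgeSet) :
    (xyzTransform G XYZ.one XYZ.plus XYZ.one).Adj (Sum.inl v) (Sum.inr e) ↔ True :=
  Iff.rfl

lemma xyz_adj_inr_inl (v : V) (e : G.edgeSet) :
    (xyzTransform G XYZ.one XYZ.plus XYZ.one).Adj (Sum.inr e) (Sum.inl v) ↔ True :=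
  Iff.rfl

lemma xyz_adj_inr_inr (e f : G.edgeSet) :
    (xyzTransform G XYZ.one XYZ.plus XYZ.one).Adj (Sum.inr e) (Sum.inr f) ↔
      G.lineGraph.Adj e f :=
  Iff.rfl

lemma xyz_degree_inl (v : V) :
    (xyzTransform G XYZ.one XYZ.plus XYZ.one).degree (Sum.inl v) + 1
      = Fintype.card V + Fintype.card G.edgeSet := by
  classical
  have hd : (xyzTransform G XYZ.one XYZ.plus XYZ.one).degree (Sum.inl v)
      = ∑ w : V ⊕ G.edgeSet,
          if (xyzTransform G XYZ.one XYZ.plus XYZ.one).Adj (Sum.inl v) w then 1 else 0 := by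
    rw [SimpleGraph.degree, SimpleGraph.neighborFinset_eq_filter, Finset.card_filter]
  rw [hd, Fintype.sum_sum_type]
  simp only [xyz_adj_inl_inl, xyz_adj_inl_inr, if_true]
  rw [Finset.sum_boole]
  have h1 : ({u : V | v ≠ u} : Finset V) = Finset.univ.erase v := by
    ext u; simp [ne_comm, eq_comm]
  rw [h1, Finset.card_erase_of_mem (Finset.mem_univ v)]
  have hpos : 0 < Fintype.card V := Fintype.card_pos_iff.mpr ⟨v⟩
  simp only [Nat.cast_id, Finset.sum_const, smul_eq_mul, mul_one, Finset.card_univ]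
  omega

lemma xyz_degree_inr {r : ℕ} (hreg : G.IsRegularOfDegree r) (e : G.edgeSet) :
    (xyzTransform G XYZ.one XYZ.plus XYZ.one).degree (Sum.inr e) + 2
      = Fintype.card V + 2 * r := by
  classical
  have hd : (xyzTransform G XYZ.one XYZ.plus XYZ.one).degree (Sum.inr e)
      = ∑ w : V ⊕ G.edgeSet,
          if (xyzTransform G XYZ.one XYZ.plus XYZ.one).Adj (Sum.inr e) w then 1 else 0 := by
    rw [SimpleGraph.degree, SimpleGraph.neighborFinset_eq_filter, Finset.card_filter]
  rw [hd, Fintype.sum_sum_type]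
  simp only [xyz_adj_inr_inl, xyz_adj_inr_inr, if_true]
  obtain ⟨e, he⟩ := e
  induction e using Sym2.ind with
  | _ a b =>
    have hadj : G.Adj a b := G.mem_edgeSet.mp he
    have hab : a ≠ b := hadj.ne
    have key : ∀ f : G.edgeSet,
        (if G.lineGraph.Adj ⟨s(a,b), he⟩ f then (1:ℕ) else 0)
          + (if f = ⟨s(a,b), he⟩ then 2 else 0)
        = (if a ∈ (f : Sym2 V) then 1 else 0) + (if b ∈ (f : Sym2 V) then 1 else 0) := by
      intro f
      by_cases hf : f = ⟨s(a,b), he⟩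
      · subst hf
        simp [SimpleGraph.irrefl, Sym2.mem_iff]
      · have hne : (⟨s(a,b), he⟩ : G.edgeSet) ≠ f := Ne.symm hf
        have hiff : G.lineGraph.Adj ⟨s(a,b), he⟩ f ↔ (a ∈ (f : Sym2 V) ∨ b ∈ (f : Sym2 V)) := by
          rw [SimpleGraph.lineGraph_adj_iff_exists]
          constructor
          · rintro ⟨-, w, hw1, hw2⟩
            rcases Sym2.mem_iff.mp hw1 with rfl | rfl
            · exact Or.inl hw2
            · exact Or.inr hw2
          · rintro (h | h)
            · exact ⟨hne, a, by simp [Sym2.mem_iff], h⟩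
            · exact ⟨hne, b, by simp [Sym2.mem_iff], h⟩
        have hnot : ¬ (a ∈ (f : Sym2 V) ∧ b ∈ (f : Sym2 V)) := by
          rintro ⟨h1, h2⟩
          exact hf (Subtype.ext ((Sym2.mem_and_mem_iff hab).mp ⟨h1, h2⟩))
        by_cases h1 : a ∈ (f : Sym2 V) <;> by_cases h2 : b ∈ (f : Sym2 V) <;>
          simp_all [hiff]
    have hsum := Finset.sum_congr rfl (fun f (_ : f ∈ Finset.univ) => key f)
    rw [Finset.sum_add_distrib, Finset.sum_add_distrib] at hsum
    rw [sum_ite_mem_nat, sum_ite_mem_nat, hreg a, hreg b] at hsum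
    rw [Finset.sum_ite_eq' Finset.univ (⟨s(a,b), he⟩ : G.edgeSet) (fun _ => (2:ℕ))] at hsum
    simp only [Finset.mem_univ, if_true] at hsum
    have hcard : ∑ _v : V, (1:ℕ) = Fintype.card V := by simp
    omega

end XYZAux2
section XYZAux3
set_option linter.unusedSectionVars false
set_option maxHeartbeats 1000000

open Matrix Finset SimpleGraph Polynomial

variable {V : Type*} [Fintype V] (G : SimpleGraph V)

lemma N_diag (e : G.edgeSet) : ((incB G)ᵀ * incB G) e e = 2 := by
  rw [Matrix.mul_apply]
  have key : ∀ v, (incB G)ᵀ e v * incB G v e = incB G v e := by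
    intro v; simp only [transpose_apply, incB, of_apply]; split_ifs <;> ring
  rw [Finset.sum_congr rfl fun v _ => key v, sum_col_incB]

lemma N_nonneg (e f : G.edgeSet) : 0 ≤ ((incB G)ᵀ * incB G) e f := by
  rw [Matrix.mul_apply]
  apply Finset.sum_nonneg
  intro v _
  simp only [transpose_apply, incB, of_apply]
  split_ifs <;> norm_num

lemma N_offdiag {e f : G.edgeSet} (hef : e ≠ f) :
    ((incB G)ᵀ * incB G) e f = if G.lineGraph.Adj e f then 1 else 0 := by
  classical
  rw [Matrix.mul_apply]
  have hstep : ∀ v, (incB G)ᵀ e v * incB G v f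
      = if (v ∈ (e : Sym2 V) ∧ v ∈ (f : Sym2 V)) then (1:ℝ) else 0 := by
    intro v
    simp only [transpose_apply, incB, of_apply]
    split_ifs with h1 h2 h3 h4 <;> simp_all
  rw [Finset.sum_congr rfl fun v _ => hstep v]
  by_cases hadj : G.lineGraph.Adj e f
  · obtain ⟨-, v₀, hv₀e, hv₀f⟩ := (SimpleGraph.lineGraph_adj_iff_exists).mp hadj
    have huniq : ∀ v : V, (v ∈ (e : Sym2 V) ∧ v ∈ (f : Sym2 V)) ↔ v = v₀ := by
      intro v
      constructor
      · rintro ⟨h1, h2⟩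
        by_contra hne
        have he' : (e : Sym2 V) = s(v, v₀) := (Sym2.mem_and_mem_iff hne).mp ⟨h1, hv₀e⟩
        have hf' : (f : Sym2 V) = s(v, v₀) := (Sym2.mem_and_mem_iff hne).mp ⟨h2, hv₀f⟩
        exact hef (Subtype.ext (he'.trans hf'.symm))
      · rintro rfl; exact ⟨hv₀e, hv₀f⟩
    simp only [huniq]
    simp only [Finset.sum_ite_eq', Finset.mem_univ, if_true, hadj]
  · have hnone : ∀ v : V, ¬ (v ∈ (e : Sym2 V) ∧ v ∈ (f : Sym2 V)) := by
      intro v hv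
      exact hadj (SimpleGraph.lineGraph_adj_iff_exists.mpr ⟨hef, v, hv.1, hv.2⟩)
    simp only [hnone, if_false, Finset.sum_const_zero, hadj]

lemma N_rowsum {r : ℕ} (hreg : G.IsRegularOfDegree r) (e : G.edgeSet) :
    ∑ f : G.edgeSet, ((incB G)ᵀ * incB G) e f = 2 * r := by
  simp only [Matrix.mul_apply, transpose_apply]
  rw [Finset.sum_comm]
  have key : ∀ v : V, ∑ f : G.edgeSet, incB G v e * incB G v f = incB G v e * r := by
    intro v
    rw [← Finset.mul_sum, sum_row_incB, hreg v]
  rw [Finset.sum_congr rfl fun v _ => key v, ← Finset.sum_mul, sum_col_incB]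

/-- determinant of `aI - cJ` -/
lemma det_diag_sub_const {W : Type*} [Fintype W] [Nonempty W] (a c : ℝ) (ha : a ≠ 0) :
    (Matrix.of fun u v : W => (if u = v then a else 0) - c).det
      = a ^ (Fintype.card W - 1) * (a - c * Fintype.card W) := by
  classical
  have h : (Matrix.of fun u v : W => (if u = v then a else 0) - c)
      = a • ((1 : Matrix W W ℝ)
          + Matrix.replicateCol Unit (fun _ : W => -(c/a)) * Matrix.replicateRow Unit (fun _ : W => (1:ℝ))) := by
    ext u v
    simp only [Matrix.of_apply, Matrix.smul_apply, Matrix.add_apply, Matrix.one_apply,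
      Matrix.mul_apply, Matrix.replicateCol_apply, Matrix.replicateRow_apply, Finset.univ_unique,
      Finset.sum_singleton, smul_eq_mul, mul_one]
    split_ifs <;> field_simp <;> ring
  rw [h, Matrix.det_smul, Matrix.det_one_add_replicateCol_mul_replicateRow]
  have hdot : (fun _ : W => (1:ℝ)) ⬝ᵥ (fun _ => -(c/a)) = -(Fintype.card W * (c/a)) := by
    simp [dotProduct]
  rw [hdot]
  obtain ⟨k, hk⟩ : ∃ k, Fintype.card W = k + 1 :=
    ⟨Fintype.card W - 1, by have := Fintype.card_pos (α := W); omega⟩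
  rw [hk]
  simp only [Nat.add_sub_cancel, pow_succ]
  push_cast
  field_simp
  ring

lemma prod_split_last {n : ℕ} (hn : 0 < n) (f : Fin n → ℝ) :
    ∏ i, f i = f ⟨n - 1, by omega⟩
      * ∏ i : Fin (n - 1), f (Fin.castLE (Nat.sub_le n 1) i) := by
  obtain ⟨k, rfl⟩ : ∃ k, n = k + 1 := ⟨n - 1, by omega⟩
  rw [Fin.prod_univ_castSucc, mul_comm]
  rfl

end XYZAux3
section XYZAux4
set_option linter.unusedSectionVars false
set_option maxHeartbeats 1000000

open Matrix Finset SimpleGraph Polynomial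

variable {V : Type*} [Fintype V] (G : SimpleGraph V)

lemma xyz_block {r n m : ℕ} (hn : Fintype.card V = n) (hm : Fintype.card G.edgeSet = m)
    (hreg : G.IsRegularOfDegree r) (lam : ℝ) :
    fQ (xyzTransform G XYZ.one XYZ.plus XYZ.one) lam
      = (Matrix.fromBlocks
          (Matrix.of fun u v : V => (if u = v then lam - n - m + 2 else 0) - 1)
          (Matrix.of fun _ _ => (-1 : ℝ))
          (Matrix.of fun _ _ => (-1 : ℝ))
          ((lam - n - 2*r + 4) • (1 : Matrix G.edgeSet G.edgeSet ℝ)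
            - (incB G)ᵀ * incB G)).det := by
  classical
  unfold fQ
  congr 1
  ext i j
  rcases i with u | e <;> rcases j with v | f
  · -- inl inl
    simp only [Matrix.sub_apply, Matrix.smul_apply, Matrix.one_apply, smul_eq_mul,
      Matrix.fromBlocks_apply₁₁, Matrix.of_apply, signlessLaplacian,
      Sum.inl.injEq, xyz_adj_inl_inl]
    by_cases huv : u = v
    · subst huv
      have hdeg := xyz_degree_inl G u
      rw [hn, hm] at hdeg
      have hdegR : ((xyzTransform G XYZ.one XYZ.plus XYZ.one).degree (Sum.inl u) : ℝ)
          = (n : ℝ) + m - 1 := by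
        have : ((xyzTransform G XYZ.one XYZ.plus XYZ.one).degree (Sum.inl u) : ℝ) + 1
            = (n : ℝ) + m := by exact_mod_cast congrArg (Nat.cast (R := ℝ)) hdeg
        linarith
      simp only [if_pos rfl, ne_eq, not_true_eq_false, if_false, hdegR, if_true]
      ring
    · simp only [if_neg huv, ne_eq, huv, not_false_eq_true, if_true, if_false]
      ring
  · -- inl inr
    simp only [Matrix.sub_apply, Matrix.smul_apply, Matrix.one_apply, smul_eq_mul,
      Matrix.fromBlocks_apply₁₂, Matrix.of_apply, signlessLaplacian, xyz_adj_inl_inr,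
      reduceCtorEq, if_false, if_true]
    ring
  · -- inr inl
    simp only [Matrix.sub_apply, Matrix.smul_apply, Matrix.one_apply, smul_eq_mul,
      Matrix.fromBlocks_apply₂₁, Matrix.of_apply, signlessLaplacian, xyz_adj_inr_inl,
      reduceCtorEq, if_false, if_true]
    ring
  · -- inr inr
    simp only [Matrix.sub_apply, Matrix.smul_apply, Matrix.one_apply, smul_eq_mul,
      Matrix.fromBlocks_apply₂₂, Matrix.of_apply, signlessLaplacian,
      Sum.inr.injEq, xyz_adj_inr_inr]
    by_cases hef : e = f
    · subst hef
      have hdeg := xyz_degree_inr G hreg e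
      rw [hn] at hdeg
      have hdegR : ((xyzTransform G XYZ.one XYZ.plus XYZ.one).degree (Sum.inr e) : ℝ)
          = (n : ℝ) + 2 * r - 2 := by
        have : ((xyzTransform G XYZ.one XYZ.plus XYZ.one).degree (Sum.inr e) : ℝ) + 2
            = (n : ℝ) + 2 * r := by exact_mod_cast congrArg (Nat.cast (R := ℝ)) hdeg
        linarith
      simp only [if_pos rfl, SimpleGraph.irrefl, if_false, hdegR, N_diag, if_true]
      ring
    · simp only [if_neg hef, N_offdiag G hef]
      ring
end XYZAux4
section XYZAux5
set_option linter.unusedSectionVars false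
set_option maxHeartbeats 1000000

open Matrix Finset SimpleGraph Polynomial

variable {V : Type*} [Fintype V] (G : SimpleGraph V)

lemma det_S_eq {n m : ℕ} (hn : Fintype.card V = n) (hm : Fintype.card G.edgeSet = m)
    (hmn : n ≤ m) (q : Fin n → ℝ)
    (hq : ∀ x : ℝ, fQ G x = ∏ i : Fin n, (x - q i))
    (b : ℝ) (hb : b ≠ 0) :
    (b • (1 : Matrix G.edgeSet G.edgeSet ℝ) - (incB G)ᵀ * incB G).det
      = b ^ (m - n) * ∏ i : Fin n, (b - q i) := by
  classical
  have h1 : b • (1 : Matrix G.edgeSet G.edgeSet ℝ) - (incB G)ᵀ * incB G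
      = b • ((1 : Matrix G.edgeSet G.edgeSet ℝ) + ((-b⁻¹) • (incB G)ᵀ) * incB G) := by
    rw [smul_add, Matrix.smul_mul, smul_smul, mul_neg, mul_inv_cancel₀ hb, neg_smul,
      one_smul, ← sub_eq_add_neg]
  rw [h1, Matrix.det_smul, hm, Matrix.det_one_add_mul_comm]
  have h2 : incB G * ((-b⁻¹) • (incB G)ᵀ) = (-b⁻¹) • signlessLaplacian G := by
    rw [Matrix.mul_smul, incB_mul_transpose]
  rw [h2]
  have h3 : (1 : Matrix V V ℝ) + (-b⁻¹) • signlessLaplacian G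
      = b⁻¹ • (b • (1 : Matrix V V ℝ) - signlessLaplacian G) := by
    rw [smul_sub, smul_smul, inv_mul_cancel₀ hb, one_smul, neg_smul, ← sub_eq_add_neg]
  rw [h3, Matrix.det_smul, hn]
  have h4 : (b • (1 : Matrix V V ℝ) - signlessLaplacian G).det = ∏ i, (b - q i) := hq b
  rw [h4, pow_sub₀ b hb hmn, inv_pow]
  ring

end XYZAux5
set_option maxHeartbeats 2000000
set_option synthInstance.maxHeartbeats 400000
theorem signless_charpoly_xyz_op1 {V : Type*} [Fintype V] (G : SimpleGraph V) (r n m : ℕ)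
    (hn : Fintype.card V = n) (hm : Fintype.card G.edgeSet = m)
    (hreg : G.IsRegularOfDegree r) (hr2 : 2 ≤ r) (hn0 : 0 < n)
    (q : Fin n → ℝ) (hmono : Monotone q)
    (hlast : q ⟨n - 1, by omega⟩ = 2 * r)
    (hq : ∀ x : ℝ, fQ G x = ∏ i : Fin n, (x - q i)) :
    ∀ lam : ℝ,
      fQ (xyzTransform G XYZ.one XYZ.plus XYZ.one) lam =
        ((lam - 2 * n - m + 2) * (lam - n - 4 * r + 4) - m * n) *
          (lam - n - 2 * r + 4) ^ (m - n) * (lam - n - m + 2) ^ (n - 1) *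
          ∏ i : Fin (n - 1), (lam - n - 2 * r + 4 - (q (Fin.castLE (Nat.sub_le n 1) i))) := by
  classical
  have hV : Nonempty V := by
    rw [← Fintype.card_pos_iff, hn]; exact hn0
  -- handshake: n * r = 2 * m, hence n ≤ m
  have h2m : n * r = 2 * m := by
    have hs := G.sum_degrees_eq_twice_card_edges
    have h1 : ∑ v : V, G.degree v = n * r := by
      rw [Finset.sum_congr rfl fun v _ => hreg v]
      simp [Finset.card_univ, hn, mul_comm]
    rw [h1, SimpleGraph.edgeFinset_card, hm] at hs
    exact hs
  have hmn : n ≤ m := by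
    have h := Nat.mul_le_mul_left n hr2
    rw [h2m] at h
    omega
  -- the identity for all sufficiently large lam
  have key : ∀ lam : ℝ, (n : ℝ) + m + 4 * r + 4 < lam →
      fQ (xyzTransform G XYZ.one XYZ.plus XYZ.one) lam =
        ((lam - 2 * n - m + 2) * (lam - n - 4 * r + 4) - m * n) *
          (lam - n - 2 * r + 4) ^ (m - n) * (lam - n - m + 2) ^ (n - 1) *
          ∏ i : Fin (n - 1), (lam - n - 2 * r + 4 - (q (Fin.castLE (Nat.sub_le n 1) i))) := by
    intro lam hlam
    have hr0 : (0:ℝ) ≤ r := Nat.cast_nonneg r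
    have hn0' : (0:ℝ) ≤ n := Nat.cast_nonneg n
    have hm0' : (0:ℝ) ≤ m := Nat.cast_nonneg m
    have hr2' : (2:ℝ) ≤ r := by exact_mod_cast hr2
    have hb2r : 2 * (r:ℝ) < lam - n - 2*r + 4 := by linarith
    have hbpos : (0:ℝ) < lam - (n:ℝ) - 2*r + 4 := by linarith
    have hbne : lam - (n:ℝ) - 2*r + 4 ≠ 0 := ne_of_gt hbpos
    have hb2rne : lam - (n:ℝ) - 2*r + 4 - 2*r ≠ 0 := ne_of_gt (by linarith)
    have hane : lam - (n:ℝ) - m + 2 ≠ 0 := ne_of_gt (by linarith)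
    -- the lower-right block is invertible
    have hdetS_ne : ((lam - (n:ℝ) - 2*r + 4) • (1 : Matrix G.edgeSet G.edgeSet ℝ)
        - (Matrix.transpose (incB G)) * incB G).det ≠ 0 := by
      apply det_ne_zero_of_sum_row_lt_diag
      intro e
      have hterm : ∀ f ∈ Finset.univ.erase e,
          ‖((lam - (n:ℝ) - 2*r + 4) • (1 : Matrix G.edgeSet G.edgeSet ℝ)
            - (Matrix.transpose (incB G)) * incB G) e f‖ = ((Matrix.transpose (incB G)) * incB G) e f := by
        intro f hf
        have hef : e ≠ f := (Finset.ne_of_mem_erase hf).symm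
        rw [Matrix.sub_apply, Matrix.smul_apply, Matrix.one_apply_ne hef]
        simp only [smul_eq_mul, mul_zero, zero_sub, norm_neg, Real.norm_eq_abs]
        exact abs_of_nonneg (N_nonneg G e f)
      rw [Finset.sum_congr rfl hterm,
        Finset.sum_erase_eq_sub (Finset.mem_univ e), N_rowsum G hreg e, N_diag G e]
      rw [Matrix.sub_apply, Matrix.smul_apply, Matrix.one_apply_eq, N_diag G e]
      simp only [smul_eq_mul, mul_one, Real.norm_eq_abs]
      rw [abs_of_nonneg (by linarith)]
      linarith
    haveI hInv : Invertible ((lam - (n:ℝ) - 2*r + 4) • (1 : Matrix G.edgeSet G.edgeSet ℝ)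
        - (Matrix.transpose (incB G)) * incB G) :=
      Matrix.invertibleOfIsUnitDet _ (isUnit_iff_ne_zero.mpr hdetS_ne)
    rw [xyz_block G hn hm hreg lam, Matrix.det_fromBlocks₂₂]
    -- row sums of the inverse of the lower-right block
    have hSrow : ∀ e, ∑ f, ((lam - (n:ℝ) - 2*r + 4) • (1 : Matrix G.edgeSet G.edgeSet ℝ)
        - (Matrix.transpose (incB G)) * incB G) e f = lam - (n:ℝ) - 2*r + 4 - 2*r := by
      intro e
      simp only [Matrix.sub_apply, Matrix.smul_apply, smul_eq_mul]
      rw [Finset.sum_sub_distrib, N_rowsum G hreg e, ← Finset.mul_sum]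
      have h1 : ∑ f : G.edgeSet, (1 : Matrix G.edgeSet G.edgeSet ℝ) e f = 1 := by
        simp [Matrix.one_apply]
      rw [h1, mul_one]
    have hinvS_row : ∀ e, ∑ f, (⅟((lam - (n:ℝ) - 2*r + 4) • (1 : Matrix G.edgeSet G.edgeSet ℝ)
        - (Matrix.transpose (incB G)) * incB G)) e f = (lam - (n:ℝ) - 2*r + 4 - 2*r)⁻¹ := by
      have hvec : Matrix.mulVec ((lam - (n:ℝ) - 2*r + 4) • (1 : Matrix G.edgeSet G.edgeSet ℝ)
          - (Matrix.transpose (incB G)) * incB G) (fun _ => (1:ℝ))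
          = (lam - (n:ℝ) - 2*r + 4 - 2*r) • (fun _ => (1:ℝ)) := by
        funext e
        simp only [Matrix.mulVec, dotProduct, mul_one, Pi.smul_apply, smul_eq_mul]
        rw [hSrow e]
      have h2 : (fun _ => (1:ℝ)) = (lam - (n:ℝ) - 2*r + 4 - 2*r)
          • (Matrix.mulVec (⅟((lam - (n:ℝ) - 2*r + 4) • (1 : Matrix G.edgeSet G.edgeSet ℝ)
            - (Matrix.transpose (incB G)) * incB G)) (fun _ => (1:ℝ))) := by
        calc (fun _ => (1:ℝ))
            = Matrix.mulVec (⅟((lam - (n:ℝ) - 2*r + 4) • (1 : Matrix G.edgeSet G.edgeSet ℝ)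
                - (Matrix.transpose (incB G)) * incB G))
              (Matrix.mulVec (((lam - (n:ℝ) - 2*r + 4) • (1 : Matrix G.edgeSet G.edgeSet ℝ)
                - (Matrix.transpose (incB G)) * incB G)) (fun _ => (1:ℝ))) := by
              rw [Matrix.mulVec_mulVec, invOf_mul_self, Matrix.one_mulVec]
          _ = _ := by rw [hvec, Matrix.mulVec_smul]
      intro e
      have h3 := congrFun h2 e
      simp only [Pi.smul_apply, smul_eq_mul] at h3
      have h4 : (Matrix.mulVec (⅟((lam - (n:ℝ) - 2*r + 4) • (1 : Matrix G.edgeSet G.edgeSet ℝ)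
          - (Matrix.transpose (incB G)) * incB G)) (fun _ => (1:ℝ))) e
          = ∑ f, (⅟((lam - (n:ℝ) - 2*r + 4) • (1 : Matrix G.edgeSet G.edgeSet ℝ)
            - (Matrix.transpose (incB G)) * incB G)) e f := by
        simp [Matrix.mulVec, dotProduct]
      rw [h4] at h3
      exact eq_inv_of_mul_eq_one_left (by linear_combination -h3)
    -- the Schur complement
    have hschur : (Matrix.of fun u v : V => (if u = v then lam - n - m + 2 else 0) - 1)
        - (Matrix.of fun (_ : V) (_ : G.edgeSet) => (-1:ℝ))
          * ⅟((lam - (n:ℝ) - 2*r + 4) • (1 : Matrix G.edgeSet G.edgeSet ℝ)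
              - (Matrix.transpose (incB G)) * incB G)
          * (Matrix.of fun (_ : G.edgeSet) (_ : V) => (-1:ℝ))
        = Matrix.of fun u v : V =>
            (if u = v then lam - n - m + 2 else 0)
              - (1 + m * (lam - (n:ℝ) - 2*r + 4 - 2*r)⁻¹) := by
      ext u v
      simp only [Matrix.sub_apply, Matrix.of_apply, Matrix.mul_apply, neg_one_mul,
        mul_neg_one, Finset.sum_neg_distrib, neg_neg]
      rw [Finset.sum_comm]
      rw [Finset.sum_congr rfl fun e (_ : e ∈ Finset.univ) => hinvS_row e]
      rw [Finset.sum_const, Finset.card_univ, hm, nsmul_eq_mul]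
      ring
    rw [hschur]
    rw [det_diag_sub_const (lam - (n:ℝ) - m + 2) _ hane, hn]
    rw [det_S_eq G hn hm hmn q hq _ hbne]
    rw [prod_split_last hn0 (fun i => lam - (n:ℝ) - 2*r + 4 - q i), hlast]
    have hscal : (lam - (n:ℝ) - 2*r + 4 - 2*r)
        * ((lam - (n:ℝ) - m + 2) - (1 + m * (lam - (n:ℝ) - 2*r + 4 - 2*r)⁻¹) * n)
        = ((lam - 2*n - m + 2) * (lam - n - 4*r + 4) - m * n) := by
      field_simp
      ring
    linear_combination ((lam - (n:ℝ) - 2*r + 4) ^ (m - n)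
      * (lam - (n:ℝ) - m + 2) ^ (n - 1)
      * ∏ i : Fin (n - 1), (lam - (n:ℝ) - 2*r + 4 - q (Fin.castLE (Nat.sub_le n 1) i))) * hscal
  -- both sides are polynomial functions of lam, so the identity extends everywhere
  have hp1 : ∀ x : ℝ,
      (signlessLaplacian (xyzTransform G XYZ.one XYZ.plus XYZ.one)).charpoly.eval x
        = fQ (xyzTransform G XYZ.one XYZ.plus XYZ.one) x := by
    intro x
    rw [Matrix.charpoly, ← Polynomial.coe_evalRingHom, RingHom.map_det]
    congr 1
    ext i j
    by_cases hij : i = j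
    · subst hij
      simp [Matrix.charmatrix_apply_eq, Matrix.sub_apply, Matrix.smul_apply,
        Matrix.one_apply_eq, smul_eq_mul]
    · simp [Matrix.charmatrix_apply_ne _ _ _ hij, Matrix.sub_apply, Matrix.smul_apply,
        Matrix.one_apply, hij, smul_eq_mul]
  set p2 : Polynomial ℝ :=
    ((Polynomial.X - Polynomial.C (2*(n:ℝ)) - Polynomial.C (m:ℝ) + Polynomial.C 2)
        * (Polynomial.X - Polynomial.C (n:ℝ) - Polynomial.C (4*(r:ℝ)) + Polynomial.C 4)
      - Polynomial.C ((m:ℝ) * n))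
    * (Polynomial.X - Polynomial.C (n:ℝ) - Polynomial.C (2*(r:ℝ)) + Polynomial.C 4) ^ (m - n)
    * (Polynomial.X - Polynomial.C (n:ℝ) - Polynomial.C (m:ℝ) + Polynomial.C 2) ^ (n - 1)
    * ∏ i : Fin (n - 1), (Polynomial.X - Polynomial.C (n:ℝ) - Polynomial.C (2*(r:ℝ))
        + Polynomial.C 4 - Polynomial.C (q (Fin.castLE (Nat.sub_le n 1) i))) with hp2def
  have hp2 : ∀ x : ℝ, p2.eval x =
      ((x - 2 * n - m + 2) * (x - n - 4 * r + 4) - m * n) *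
        (x - n - 2 * r + 4) ^ (m - n) * (x - n - m + 2) ^ (n - 1) *
        ∏ i : Fin (n - 1), (x - n - 2 * r + 4 - (q (Fin.castLE (Nat.sub_le n 1) i))) := by
    intro x
    rw [hp2def]
    simp [Polynomial.eval_prod]
  have hp12 : (signlessLaplacian (xyzTransform G XYZ.one XYZ.plus XYZ.one)).charpoly = p2 := by
    apply Polynomial.eq_of_infinite_eval_eq
    apply Set.Infinite.mono ?_ (Set.Ioi_infinite ((n:ℝ) + m + 4*r + 4))
    intro x hx
    simp only [Set.mem_setOf_eq]
    rw [hp1 x, hp2 x]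
    exact key x hx
  intro lam
  rw [← hp1 lam, hp12, hp2 lam]
end
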